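/- Let Y be a finite set, π' a full-support probability distribution on Y, R : Y → ℝ, β > 0, and π* the Gibbs distribution π*(y) = π'(y)exp(R(y)/β)/Z. For any full-support probability distribution π on Y, define the implicit reward R_π(y) = β·log(π(y)/π'(y)). Then for any full-support sampling distribution π_s on Y, the loss L(π) = E_{y∼π_s}[((R_π(y) − E_{π_s}R_π) − (R(y) − E_{π_s}R))²] satisfies L(π) ≥ 0 with equality if and only if π = π*. -/

import Mathlib

open Finset

theorem gvpo_loss_nonneg_and_zero_iff_gibbs
    {Y : Type*} [Fintype Y] [Nonempty Y]
    (π' πs π : Y → ℝ)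
    (hπ' : ∀ y, 0 < π' y) (hπ'1 : ∑ y, π' y = 1)
    (hπs : ∀ y, 0 < πs y) (hπs1 : ∑ y, πs y = 1)
    (hπ : ∀ y, 0 < π y) (hπ1 : ∑ y, π y = 1)
    (R : Y → ℝ) (β : ℝ) (hβ : 0 < β)
    (Z : ℝ) (hZ : Z = ∑ y, π' y * Real.exp (R y / β))
    (πstar : Y → ℝ) (hπstar : ∀ y, πstar y = π' y * Real.exp (R y / β) / Z)
    (Rπ : Y → ℝ) (hRπ : ∀ y, Rπ y = β * Real.log (π y / π' y))
    (L : ℝ)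
    (hL : L = ∑ y, πs y *
      ((Rπ y - ∑ z, πs z * Rπ z) - (R y - ∑ z, πs z * R z))^2) :
    0 ≤ L ∧ (L = 0 ↔ π = πstar) := by
  have hZpos : 0 < Z := by
    rw [hZ]
    exact Finset.sum_pos (fun y _ => mul_pos (hπ' y) (Real.exp_pos _))
      Finset.univ_nonempty
  set c : ℝ := ∑ z, πs z * (Rπ z - R z) with hc
  have hcsplit : c = (∑ z, πs z * Rπ z) - ∑ z, πs z * R z := by
    rw [hc, ← Finset.sum_sub_distrib]
    congr 1; ext z; ring
  have hL' : L = ∑ y, πs y * ((Rπ y - R y) - c)^2 := by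
    rw [hL]; congr 1; ext y; rw [hcsplit]; ring
  have hterm : ∀ y ∈ Finset.univ, 0 ≤ πs y * ((Rπ y - R y) - c)^2 :=
    fun y _ => mul_nonneg (hπs y).le (sq_nonneg _)
  have hnonneg : 0 ≤ L := hL' ▸ Finset.sum_nonneg hterm
  refine ⟨hnonneg, ?_, ?_⟩
  · intro hL0
    have hall : ∀ y, Rπ y - R y = c := by
      intro y
      have h0 := (Finset.sum_eq_zero_iff_of_nonneg hterm).mp (hL' ▸ hL0) y
        (Finset.mem_univ y)
      have := (mul_eq_zero.mp h0).resolve_left (hπs y).ne'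
      have := pow_eq_zero_iff (n := 2) (by norm_num) |>.mp this
      linarith
    -- From hall: π y = π' y * exp (R y / β) * exp (c / β)
    have hform : ∀ y, π y = π' y * Real.exp (R y / β) * Real.exp (c / β) := by
      intro y
      have h1 : Real.log (π y / π' y) = R y / β + c / β := by
        have := hall y
        rw [hRπ y] at this
        field_simp at this ⊢
        linarith
      have h2 : π y / π' y = Real.exp (R y / β + c / β) := by
        rw [← h1, Real.exp_log (div_pos (hπ y) (hπ' y))]
      rw [Real.exp_add] at h2
      have := (div_eq_iff (hπ' y).ne').mp h2
      linarith [this]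
    have hsum : (1 : ℝ) = Z * Real.exp (c / β) := by
      rw [← hπ1, hZ, Finset.sum_mul]
      exact Finset.sum_congr rfl fun y _ => hform y
    have hexp : Real.exp (c / β) = 1 / Z := by
      field_simp
      linarith [hsum]
    funext y
    rw [hform y, hπstar y, hexp]
    field_simp
  · intro hpieq
    have hRπ' : ∀ y, Rπ y - R y = -(β * Real.log Z) := by
      intro y
      rw [hRπ y, hpieq, hπstar y]
      have h1 : π' y * Real.exp (R y / β) / Z / π' y = Real.exp (R y / β) / Z := by
        have h' := (hπ' y).ne'
        have hZ' := hZpos.ne'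
        field_simp
      rw [h1, Real.log_div (Real.exp_pos _).ne' hZpos.ne',
        Real.log_exp]
      field_simp
      ring
    have hc0 : c = -(β * Real.log Z) := by
      rw [hc]
      have : ∀ z ∈ Finset.univ, πs z * (Rπ z - R z) = πs z * (-(β * Real.log Z)) :=
        fun z _ => by rw [hRπ' z]
      rw [Finset.sum_congr rfl this, ← Finset.sum_mul, hπs1, one_mul]
    rw [hL']
    apply Finset.sum_eq_zero
    intro y _
    rw [hRπ' y, hc0]
    ring
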